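/- Let λ_j, λ_m > 0 and let κ ≥ 1 be real numbers. Then ∫_{r=0}^{∞} ∫_{u=κr}^{∞} 4(πλ_j)^2 · r · u · e^{−πλ_j u^2} · ( e^{−πλ_m κ^2 r^2} − e^{−πλ_m u^2} ) du dr = λ_j λ_m κ^{−2} / (λ_j + λ_m)^2. (This is the closed form in Lemma 1 for the probability Pr(X^{(j,m)}), j ≠ m, that the typical mobile terminal associates with tier j while its most interfered base station belongs to tier m, in the regime where κ = (t^{(m)}/t^{(j)})^{1/α} ≥ 1, so that λ_j λ_m κ^{−2}/(λ_j+λ_m)^2 = λ_j λ_m (t^{(j)}/t^{(m)})^{2/α}/(λ_j+λ_m)^2.) -/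

import Mathlib

open MeasureTheory Real Set Filter

lemma aux_int (a c : ℝ) (ha : 0 < a) :
    ∫ u in Ioi c, u * Real.exp (-(a * u ^ 2)) = Real.exp (-(a * c ^ 2)) / (2 * a) := by
  have hderiv : ∀ x ∈ Ici c, HasDerivAt (fun u : ℝ => -Real.exp (-(a * u ^ 2)) / (2 * a))
      (x * Real.exp (-(a * x ^ 2))) x := by
    intro x _
    have h1 : HasDerivAt (fun u : ℝ => -(a * u ^ 2)) (-(a * (2 * x))) x := by
      simpa using ((hasDerivAt_pow 2 x).const_mul a).fun_neg
    have h2 := (h1.exp.fun_neg).div_const (2 * a)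
    refine h2.congr_deriv ?_
    field_simp
  have hint : IntegrableOn (fun u : ℝ => u * Real.exp (-(a * u ^ 2))) (Ioi c) := by
    have := (integrable_mul_exp_neg_mul_sq ha).integrableOn (s := Ioi c)
    simpa [neg_mul] using this
  have htend : Tendsto (fun u : ℝ => -Real.exp (-(a * u ^ 2)) / (2 * a)) atTop (nhds 0) := by
    have h0 : Tendsto (fun u : ℝ => -(a * u ^ 2)) atTop atBot := by
      have : Tendsto (fun u : ℝ => a * u ^ 2) atTop atTop :=
        (tendsto_pow_atTop (by norm_num)).const_mul_atTop ha
      exact tendsto_neg_atBot_iff.mpr this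
    have := (Real.tendsto_exp_atBot.comp h0).neg.div_const (2 * a)
    simpa using this
  rw [integral_Ioi_of_hasDerivAt_of_tendsto' hderiv hint htend]
  field_simp
  ring

/-- Lemma 1 (case j ≠ m, κ = (t⁽ᵐ⁾/t⁽ʲ⁾)^{1/α} ≥ 1): closed form of
Pr(X^{(j,m)}) as an explicit double integral. -/
theorem stmt_0 (lj lm κ : ℝ) (hlj : 0 < lj) (hlm : 0 < lm) (hκ : 1 ≤ κ) :
    (∫ r in Ioi (0:ℝ), ∫ u in Ioi (κ * r),
      4 * (π * lj) ^ 2 * r * u * Real.exp (-(π * lj * u ^ 2)) *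
        (Real.exp (-(π * lm * κ ^ 2 * r ^ 2)) - Real.exp (-(π * lm * u ^ 2))))
    = lj * lm * κ ^ (-2 : ℤ) / (lj + lm) ^ 2 := by
  set a := π * lj with ha_def
  set b := π * lm with hb_def
  have ha : 0 < a := mul_pos pi_pos hlj
  have hb : 0 < b := mul_pos pi_pos hlm
  have hab : 0 < a + b := by linarith
  have hκ0 : 0 < κ := lt_of_lt_of_le one_pos hκ
  have hinner : ∀ r : ℝ,
      (∫ u in Ioi (κ * r),
        4 * a ^ 2 * r * u * Real.exp (-(a * u ^ 2)) *
          (Real.exp (-(b * κ ^ 2 * r ^ 2)) - Real.exp (-(b * u ^ 2))))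
      = (2 * a * b / (a + b)) * (r * Real.exp (-((a + b) * κ ^ 2 * r ^ 2))) := by
    intro r
    have heq : ∀ u : ℝ,
        4 * a ^ 2 * r * u * Real.exp (-(a * u ^ 2)) *
          (Real.exp (-(b * κ ^ 2 * r ^ 2)) - Real.exp (-(b * u ^ 2)))
        = (4 * a ^ 2 * r * Real.exp (-(b * κ ^ 2 * r ^ 2))) * (u * Real.exp (-(a * u ^ 2)))
          - (4 * a ^ 2 * r) * (u * Real.exp (-((a + b) * u ^ 2))) := by
      intro u
      have hexp : Real.exp (-(a * u ^ 2)) * Real.exp (-(b * u ^ 2))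
          = Real.exp (-((a + b) * u ^ 2)) := by
        rw [← Real.exp_add]; ring_nf
      rw [mul_sub]
      rw [show 4 * a ^ 2 * r * u * Real.exp (-(a * u ^ 2)) * Real.exp (-(b * u ^ 2))
          = (4 * a ^ 2 * r) * (u * (Real.exp (-(a * u ^ 2)) * Real.exp (-(b * u ^ 2)))) by ring,
        hexp]
      ring
    simp_rw [heq]
    have hi1 : IntegrableOn (fun u : ℝ => u * Real.exp (-(a * u ^ 2))) (Ioi (κ * r)) := by
      have := (integrable_mul_exp_neg_mul_sq ha).integrableOn (s := Ioi (κ * r))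
      simpa [neg_mul] using this
    have hi2 : IntegrableOn (fun u : ℝ => u * Real.exp (-((a + b) * u ^ 2))) (Ioi (κ * r)) := by
      have h := (integrable_mul_exp_neg_mul_sq hab).integrableOn (s := Ioi (κ * r))
      simp only [neg_mul] at h
      exact h
    rw [integral_sub ((hi1.const_mul _)) ((hi2.const_mul _)), integral_const_mul,
      integral_const_mul, aux_int a (κ * r) ha, aux_int (a + b) (κ * r) hab]
    have hcomb : Real.exp (-(b * κ ^ 2 * r ^ 2)) * Real.exp (-(a * (κ * r) ^ 2))
        = Real.exp (-((a + b) * κ ^ 2 * r ^ 2)) := by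
      rw [← Real.exp_add]; ring_nf
    have hcomb2 : Real.exp (-((a + b) * (κ * r) ^ 2)) = Real.exp (-((a + b) * κ ^ 2 * r ^ 2)) := by
      ring_nf
    rw [hcomb2]
    rw [show 4 * a ^ 2 * r * Real.exp (-(b * κ ^ 2 * r ^ 2)) * (Real.exp (-(a * (κ * r) ^ 2)) / (2 * a))
        = (4 * a ^ 2 * r / (2 * a)) * (Real.exp (-(b * κ ^ 2 * r ^ 2)) * Real.exp (-(a * (κ * r) ^ 2))) by ring,
      hcomb]
    field_simp
    ring
  have h1 : (∫ r in Ioi (0:ℝ), ∫ u in Ioi (κ * r),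
      4 * a ^ 2 * r * u * Real.exp (-(a * u ^ 2)) *
        (Real.exp (-(b * κ ^ 2 * r ^ 2)) - Real.exp (-(b * u ^ 2))))
      = ∫ r in Ioi (0:ℝ), (2 * a * b / (a + b)) * (r * Real.exp (-((a + b) * κ ^ 2 * r ^ 2))) := by
    exact setIntegral_congr_fun measurableSet_Ioi (fun r _ => hinner r)
  have hc : 0 < (a + b) * κ ^ 2 := mul_pos hab (by positivity)
  have h2 : (∫ r in Ioi (0:ℝ), (2 * a * b / (a + b)) * (r * Real.exp (-((a + b) * κ ^ 2 * r ^ 2))))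
      = (2 * a * b / (a + b)) * (Real.exp (-((a + b) * κ ^ 2 * 0 ^ 2)) / (2 * ((a + b) * κ ^ 2))) := by
    rw [integral_const_mul]
    congr 1
    have := aux_int ((a + b) * κ ^ 2) 0 hc
    simpa [mul_assoc] using this
  calc (∫ r in Ioi (0:ℝ), ∫ u in Ioi (κ * r),
      4 * (π * lj) ^ 2 * r * u * Real.exp (-(π * lj * u ^ 2)) *
        (Real.exp (-(π * lm * κ ^ 2 * r ^ 2)) - Real.exp (-(π * lm * u ^ 2))))
      = (2 * a * b / (a + b)) * (Real.exp (-((a + b) * κ ^ 2 * 0 ^ 2)) / (2 * ((a + b) * κ ^ 2))) := by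
        rw [← h2, ← h1]
    _ = lj * lm * κ ^ (-2 : ℤ) / (lj + lm) ^ 2 := by
        rw [ha_def, hb_def]
        have hπ : (0:ℝ) < π := pi_pos
        simp only [zpow_neg, zpow_two]
        rw [show -((π * lj + π * lm) * κ ^ 2 * (0:ℝ) ^ 2) = 0 by ring, Real.exp_zero]
        field_simp
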